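/- Let D₁' and D₂' be pretriangulated categories, let D₁ ⊆ D₁' and D₂ ⊆ D₂' be left-admissible full triangulated subcategories, and let F : D₁' → D₂' be a triangulated functor. Assume that: (i) F sends D₁ into D₂ and the left orthogonal ^⊥D₁ into ^⊥D₂, and the induced functors D₁ → D₂ and ^⊥D₁ → ^⊥D₂ are equivalences of categories; and (ii) D₁ is also right admissible in D₁', and F sends the right orthogonal D₁^⊥ into D₂^⊥. Then F is an equivalence of categories. -/

import Mathlib

/-!
STATEMENT 1: Let D₁' and D₂' be pretriangulated categories, let D₁ ⊆ D₁' and D₂ ⊆ D₂' be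
left-admissible full triangulated subcategories, and let F : D₁' → D₂' be a triangulated
functor. Assume that: (i) F sends D₁ into D₂ and the left orthogonal ^⊥D₁ into ^⊥D₂, and the
induced functors D₁ → D₂ and ^⊥D₁ → ^⊥D₂ are equivalences of categories; and (ii) D₁ is also
right admissible in D₁', and F sends the right orthogonal D₁^⊥ into D₂^⊥. Then F is an
equivalence of categories.
-/

open CategoryTheory Limits CategoryTheory.Pretriangulated

/-- The left orthogonal `^⊥D`: objects `M` with `Hom(M, N) = 0` for every `N` in `D`. -/
def leftOrthogonal {D' : Type*} [Category D'] [Preadditive D'] (P : D' → Prop) :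
    D' → Prop :=
  fun M => ∀ (N : D'), P N → ∀ f : M ⟶ N, f = 0

/-- The right orthogonal `D^⊥`: objects `M` with `Hom(N, M) = 0` for every `N` in `D`. -/
def rightOrthogonal {D' : Type*} [Category D'] [Preadditive D'] (P : D' → Prop) :
    D' → Prop :=
  fun M => ∀ (N : D'), P N → ∀ f : N ⟶ M, f = 0

namespace CategoryTheory.Triangulated

/-- The (former Mathlib) structure of a full triangulated subcategory. -/
structure Subcategory (C : Type*) [Category C] [HasZeroObject C] [HasShift C ℤ]
    [Preadditive C] [∀ n : ℤ, (shiftFunctor C n).Additive] [Pretriangulated C] where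
  P : C → Prop
  zero' : ∃ (Z : C) (_ : IsZero Z), P Z
  shift (X : C) (n : ℤ) : P X → P (X⟦n⟧)
  ext₂' (T : Triangle C) (_ : T ∈ distTriang C) : P T.obj₁ → P T.obj₃ →
    ObjectProperty.isoClosure P T.obj₂

end CategoryTheory.Triangulated

set_option linter.unusedSectionVars false

namespace Stmt1Aux

variable {C : Type*} [Category C] [HasZeroObject C] [HasShift C ℤ] [Preadditive C]
  [∀ n : ℤ, (shiftFunctor C n).Additive] [Pretriangulated C]

lemma leftOrthogonal_shift {P : C → Prop} (hP : ∀ (X : C) (n : ℤ), P X → P (X⟦n⟧))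
    {M : C} (hM : leftOrthogonal P M) (n : ℤ) : leftOrthogonal P (M⟦n⟧) := by
  intro N hN f
  have h : (shiftEquiv C n).toAdjunction.homEquiv M N f = 0 := hM _ (hP N (-n) hN) _
  have h2 := ((shiftEquiv C n).toAdjunction.homEquiv M N).symm_apply_apply f
  rw [h] at h2
  rw [← h2, Adjunction.homEquiv_counit, Functor.map_zero, zero_comp]
  rfl

lemma rightOrthogonal_shift {P : C → Prop} (hP : ∀ (X : C) (n : ℤ), P X → P (X⟦n⟧))
    {M : C} (hM : rightOrthogonal P M) (n : ℤ) : rightOrthogonal P (M⟦n⟧) := by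
  intro N hN f
  have h : ((shiftEquiv C n).symm.toAdjunction.homEquiv N M).symm f = 0 :=
    hM _ (hP N (-n) hN) _
  have h2 := ((shiftEquiv C n).symm.toAdjunction.homEquiv N M).apply_symm_apply f
  rw [h] at h2
  rw [← h2, Adjunction.homEquiv_unit, Functor.map_zero, comp_zero]
  rfl

lemma localUnit_shift {P : C → Prop} (hP : ∀ (X : C) (n : ℤ), P X → P (X⟦n⟧))
    {X Y : C} (v : X ⟶ Y)
    (hv : ∀ (N : C), P N → Function.Bijective (fun k : Y ⟶ N => v ≫ k)) (n : ℤ)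
    (N : C) (hN : P N) :
    Function.Bijective (fun k : Y⟦n⟧ ⟶ N => (shiftFunctor C n).map v ≫ k) := by
  have key : (fun k : Y⟦n⟧ ⟶ N => (shiftFunctor C n).map v ≫ k)
      = ((shiftEquiv C n).toAdjunction.homEquiv X N).symm ∘
        (fun g : Y ⟶ N⟦(-n : ℤ)⟧ => v ≫ g) ∘ ((shiftEquiv C n).toAdjunction.homEquiv Y N) := by
    funext k
    show _ = ((shiftEquiv C n).toAdjunction.homEquiv X N).symm
      (v ≫ ((shiftEquiv C n).toAdjunction.homEquiv Y N) k)
    erw [show (v ≫ ((shiftEquiv C n).toAdjunction.homEquiv Y N) k)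
        = ((shiftEquiv C n).toAdjunction.homEquiv X N)
            ((shiftEquiv C n).functor.map v ≫ k) from
      (Adjunction.homEquiv_naturality_left _ _ _).symm, Equiv.symm_apply_apply]
    rfl
  rw [key]
  exact (Equiv.bijective _).comp ((hv _ (hP N (-n) hN)).comp (Equiv.bijective _))

lemma localCounit_shift {P : C → Prop} (hP : ∀ (X : C) (n : ℤ), P X → P (X⟦n⟧))
    {X Y : C} (v : X ⟶ Y)
    (hv : ∀ (N : C), P N → Function.Bijective (fun k : N ⟶ X => k ≫ v)) (n : ℤ)
    (N : C) (hN : P N) :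
    Function.Bijective (fun k : N ⟶ X⟦n⟧ => k ≫ (shiftFunctor C n).map v) := by
  have key : (fun k : N ⟶ X⟦n⟧ => k ≫ (shiftFunctor C n).map v)
      = ((shiftEquiv C n).symm.toAdjunction.homEquiv N Y) ∘
        (fun g : N⟦(-n : ℤ)⟧ ⟶ X => g ≫ v) ∘
        ((shiftEquiv C n).symm.toAdjunction.homEquiv N X).symm := by
    funext k
    show _ = ((shiftEquiv C n).symm.toAdjunction.homEquiv N Y)
      (((shiftEquiv C n).symm.toAdjunction.homEquiv N X).symm k ≫ v)
    erw [Adjunction.homEquiv_naturality_right, Equiv.apply_symm_apply]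
    rfl
  rw [key]
  exact (Equiv.bijective _).comp ((hv _ (hP N (-n) hN)).comp (Equiv.bijective _))


lemma factL (S : Triangulated.Subcategory C)
    (hadm : (ObjectProperty.ι S.P).IsRightAdjoint) (X : C) :
    ∃ (A B : C) (a : A ⟶ X) (b : X ⟶ B) (c : B ⟶ A⟦(1:ℤ)⟧),
      leftOrthogonal S.P A ∧ S.P B ∧ Triangle.mk a b c ∈ distTriang C := by
  let i := ObjectProperty.ι S.P
  let adj : i.leftAdjoint ⊣ i := Adjunction.ofIsRightAdjoint i
  let η : X ⟶ i.obj (i.leftAdjoint.obj X) := adj.unit.app X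
  have hunit : ∀ (N : C), S.P N →
      Function.Bijective (fun k : i.obj (i.leftAdjoint.obj X) ⟶ N => η ≫ k) := by
    intro N hN
    have : (fun k : i.obj (i.leftAdjoint.obj X) ⟶ N => η ≫ k)
        = fun k => adj.homEquiv X ⟨N, hN⟩ (ObjectProperty.homMk k) := by
      funext k
      rw [Adjunction.homEquiv_unit]
      rfl
    rw [this]
    exact (adj.homEquiv X ⟨N, hN⟩).bijective.comp
      (f := fun k : i.obj (i.leftAdjoint.obj X) ⟶ N =>
        (ObjectProperty.homMk k : i.leftAdjoint.obj X ⟶ ⟨N, hN⟩))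
      ⟨fun a b h => congrArg InducedCategory.Hom.hom h, fun k => ⟨k.hom, rfl⟩⟩
  obtain ⟨Cn, g, h, hT⟩ := distinguished_cocone_triangle η
  let T' := (Triangle.mk η g h).invRotate
  have hT' : T' ∈ distTriang C := inv_rot_of_distTriang _ hT
  refine ⟨T'.obj₁, T'.obj₃, T'.mor₁, T'.mor₂, T'.mor₃, ?_, ?_, hT'⟩
  · intro N hN f
    let T'' := T'.invRotate
    have hT'' : T'' ∈ distTriang C := inv_rot_of_distTriang _ hT'
    have h1 : (shiftFunctor C (-1 : ℤ)).map η ≫ T''.mor₁ = 0 := by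
      have z : η ≫ T'.mor₃ = 0 := comp_distTriang_mor_zero₂₃ _ hT'
      rw [show T''.mor₁ = -((shiftFunctor C (-1:ℤ)).map T'.mor₃)
          ≫ (shiftEquiv C (1:ℤ)).unitIso.inv.app T'.obj₁ from rfl]
      erw [Preadditive.comp_neg, ← Functor.map_comp_assoc, z,
        Functor.map_zero, zero_comp, neg_zero]
    have h2 : T''.mor₁ ≫ f = 0 := by
      apply (localUnit_shift S.shift η hunit (-1) N hN).injective
      show (shiftFunctor C (-1 : ℤ)).map η ≫ T''.mor₁ ≫ f = _
      erw [← Category.assoc, h1, zero_comp]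
      exact comp_zero.symm
    obtain ⟨k, hk⟩ := Triangle.yoneda_exact₂ _ hT'' f h2
    obtain ⟨l, hl⟩ := (hunit N hN).surjective k
    rw [hk, ← hl]
    show T'.mor₁ ≫ T'.mor₂ ≫ l = 0
    erw [← Category.assoc, comp_distTriang_mor_zero₁₂ _ hT', zero_comp]
  · exact (i.leftAdjoint.obj X).2

lemma factR (S : Triangulated.Subcategory C)
    (hadm : (ObjectProperty.ι S.P).IsLeftAdjoint) (X : C) :
    ∃ (A B : C) (a : A ⟶ X) (b : X ⟶ B) (c : B ⟶ A⟦(1:ℤ)⟧),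
      S.P A ∧ rightOrthogonal S.P B ∧ Triangle.mk a b c ∈ distTriang C := by
  let i := ObjectProperty.ι S.P
  let adj : i ⊣ i.rightAdjoint := Adjunction.ofIsLeftAdjoint i
  let ε : i.obj (i.rightAdjoint.obj X) ⟶ X := adj.counit.app X
  have hcounit : ∀ (N : C), S.P N →
      Function.Bijective (fun k : N ⟶ i.obj (i.rightAdjoint.obj X) => k ≫ ε) := by
    intro N hN
    have : (fun k : N ⟶ i.obj (i.rightAdjoint.obj X) => k ≫ ε)
        = fun k => (adj.homEquiv ⟨N, hN⟩ X).symm (ObjectProperty.homMk k) := by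
      funext k
      rw [Adjunction.homEquiv_counit]
      rfl
    rw [this]
    exact (adj.homEquiv ⟨N, hN⟩ X).symm.bijective.comp
      (f := fun k : N ⟶ i.obj (i.rightAdjoint.obj X) =>
        (ObjectProperty.homMk k : (⟨N, hN⟩ : ObjectProperty.FullSubcategory S.P) ⟶
          i.rightAdjoint.obj X))
      ⟨fun a b h => congrArg InducedCategory.Hom.hom h, fun k => ⟨k.hom, rfl⟩⟩
  obtain ⟨B, b, c, hT⟩ := distinguished_cocone_triangle ε
  refine ⟨_, B, ε, b, c, (i.rightAdjoint.obj X).2, ?_, hT⟩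
  intro N hN f
  have h1 : f ≫ c = 0 := by
    apply (localCounit_shift S.shift ε hcounit 1 N hN).injective
    show (f ≫ c) ≫ (shiftFunctor C (1 : ℤ)).map ε = _
    have z : (Triangle.mk ε b c).rotate.mor₂ ≫ (Triangle.mk ε b c).rotate.mor₃ = 0 :=
      comp_distTriang_mor_zero₂₃ _ (rot_of_distTriang _ hT)
    dsimp [Triangle.rotate] at z
    erw [Preadditive.comp_neg, neg_eq_zero] at z
    erw [Category.assoc, z, comp_zero]
    simp
  obtain ⟨k, hk⟩ := Triangle.coyoneda_exact₃ _ hT f h1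
  obtain ⟨l, hl⟩ := (hcounit N hN).surjective k
  have z2 : ε ≫ b = 0 := comp_distTriang_mor_zero₁₂ _ hT
  rw [hk, ← hl]
  show (l ≫ ε) ≫ b = 0
  rw [Category.assoc, z2, comp_zero]


section Good

variable {C : Type*} {D : Type*} [Category C] [Category D]
  [HasZeroObject C] [HasShift C ℤ] [Preadditive C]
  [∀ n : ℤ, (shiftFunctor C n).Additive] [Pretriangulated C]
  [HasZeroObject D] [HasShift D ℤ] [Preadditive D]
  [∀ n : ℤ, (shiftFunctor D n).Additive] [Pretriangulated D]
  (F : C ⥤ D) [F.CommShift ℤ] [F.IsTriangulated]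

/-- `F.map` is bijective on `Hom(M, N)`. -/
def IsGood (M N : C) : Prop :=
  Function.Bijective (F.map : (M ⟶ N) → (F.obj M ⟶ F.obj N))

lemma isGood_of_map_eq_zero (M N : C) (h1 : ∀ f : M ⟶ N, f = 0)
    (h2 : ∀ φ : F.obj M ⟶ F.obj N, φ = 0) : IsGood F M N := by
  constructor
  · intro f g _
    rw [h1 f, h1 g]
  · intro φ
    exact ⟨0, by rw [F.map_zero, h2 φ]⟩

lemma isGood_cov (T : Triangle C) (hT : T ∈ distTriang C) (M : C)
    (h₁ : IsGood F M T.obj₁) (h₃ : IsGood F M T.obj₃)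
    (h₁' : IsGood F M (T.obj₁⟦(1:ℤ)⟧)) (h₃' : IsGood F M (T.obj₃⟦(-1:ℤ)⟧)) :
    IsGood F M T.obj₂ := by
  constructor
  · intro φ ψ hφψ
    rw [← sub_eq_zero]
    have key : ∀ χ : M ⟶ T.obj₂, F.map χ = 0 → χ = 0 := by
      intro χ hχ
      have e1 : F.map (χ ≫ T.mor₂) = 0 := by rw [F.map_comp, hχ, zero_comp]
      have e2 : χ ≫ T.mor₂ = 0 := h₃.injective (by rw [e1, F.map_zero])
      obtain ⟨ψ₁, hψ₁⟩ := Triangle.coyoneda_exact₂ _ hT χ e2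
      let T2 := F.mapTriangle.obj T.invRotate
      have hT2 : T2 ∈ distTriang D :=
        F.map_distinguished _ (inv_rot_of_distTriang _ hT)
      have e3 : F.map ψ₁ ≫ T2.mor₂ = 0 := by
        show F.map ψ₁ ≫ F.map T.mor₁ = 0
        rw [← F.map_comp, ← hψ₁, hχ]
      obtain ⟨α, hα⟩ := Triangle.coyoneda_exact₂ _ hT2 (F.map ψ₁) e3
      obtain ⟨ξ, hξ⟩ := h₃'.surjective α
      have e4 : F.map ψ₁ = F.map (ξ ≫ T.invRotate.mor₁) := by
        subst hξ
        exact hα.trans (F.map_comp _ _).symm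
      have e5 : ψ₁ = ξ ≫ T.invRotate.mor₁ := h₁.injective e4
      have e6 : T.invRotate.mor₁ ≫ T.mor₁ = 0 :=
        comp_distTriang_mor_zero₁₂ _ (inv_rot_of_distTriang _ hT)
      rw [hψ₁, e5]
      exact (Category.assoc _ _ _).trans ((congrArg (ξ ≫ ·) e6).trans comp_zero)
    apply key
    rw [F.map_sub, hφψ, sub_self]
  · intro φ
    obtain ⟨ψ₃, hψ₃⟩ := h₃.surjective (φ ≫ F.map T.mor₂)
    have e1 : F.map T.mor₂ ≫ F.map T.mor₃ = 0 := by
      have := comp_distTriang_mor_zero₁₂ _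
        (F.map_distinguished _ (rot_of_distTriang _ hT))
      exact this
    have e2 : F.map (ψ₃ ≫ T.mor₃) = 0 := by
      rw [F.map_comp, hψ₃]
      show (φ ≫ F.map T.mor₂) ≫ F.map T.mor₃ = 0
      rw [Category.assoc, e1, comp_zero]
    have e3 : ψ₃ ≫ T.mor₃ = 0 := h₁'.injective (by rw [e2, F.map_zero])
    obtain ⟨ψ₂, hψ₂⟩ := Triangle.coyoneda_exact₃ _ hT ψ₃ e3
    have e4 : (φ - F.map ψ₂) ≫ (F.mapTriangle.obj T).mor₂ = 0 := by
      show (φ - F.map ψ₂) ≫ F.map T.mor₂ = 0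
      rw [Preadditive.sub_comp, ← F.map_comp, ← hψ₂, hψ₃, sub_self]
    obtain ⟨χ, hχ⟩ := Triangle.coyoneda_exact₂ _ (F.map_distinguished _ hT)
      (φ - F.map ψ₂) e4
    obtain ⟨ξ, hξ⟩ := h₁.surjective χ
    have hχ' : φ - F.map ψ₂ = χ ≫ F.map T.mor₁ := hχ
    refine ⟨ψ₂ + ξ ≫ T.mor₁, ?_⟩
    rw [F.map_add, F.map_comp, hξ]
    exact (congrArg (F.map ψ₂ + ·) hχ'.symm).trans (by abel)

lemma isGood_con (T : Triangle C) (hT : T ∈ distTriang C) (N : C)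
    (h₁ : IsGood F T.obj₁ N) (h₃ : IsGood F T.obj₃ N)
    (h₁' : IsGood F (T.obj₁⟦(1:ℤ)⟧) N) (h₃' : IsGood F (T.obj₃⟦(-1:ℤ)⟧) N) :
    IsGood F T.obj₂ N := by
  constructor
  · intro φ ψ hφψ
    rw [← sub_eq_zero]
    have key : ∀ χ : T.obj₂ ⟶ N, F.map χ = 0 → χ = 0 := by
      intro χ hχ
      have e1 : F.map (T.mor₁ ≫ χ) = 0 := by rw [F.map_comp, hχ, comp_zero]
      have e2 : T.mor₁ ≫ χ = 0 := h₁.injective (by rw [e1, F.map_zero])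
      obtain ⟨ψ₁, hψ₁⟩ := Triangle.yoneda_exact₂ _ hT χ e2
      let T2 := F.mapTriangle.obj T.rotate
      have hT2 : T2 ∈ distTriang D :=
        F.map_distinguished _ (rot_of_distTriang _ hT)
      have e3 : T2.mor₁ ≫ F.map ψ₁ = 0 := by
        show F.map T.mor₂ ≫ F.map ψ₁ = 0
        rw [← F.map_comp, ← hψ₁, hχ]
      obtain ⟨α, hα⟩ := Triangle.yoneda_exact₂ _ hT2 (F.map ψ₁) e3
      obtain ⟨ξ, hξ⟩ := h₁'.surjective α
      have e4 : F.map ψ₁ = F.map (T.rotate.mor₂ ≫ ξ) := by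
        subst hξ
        exact hα.trans (F.map_comp _ _).symm
      have e5 : ψ₁ = T.rotate.mor₂ ≫ ξ := h₃.injective e4
      have e6 : T.mor₂ ≫ T.rotate.mor₂ = 0 :=
        comp_distTriang_mor_zero₂₃ _ hT
      rw [hψ₁, e5]
      exact (Category.assoc _ _ _).symm.trans ((congrArg (· ≫ ξ) e6).trans zero_comp)
    apply key
    rw [F.map_sub, hφψ, sub_self]
  · intro φ
    obtain ⟨ψ₁, hψ₁⟩ := h₁.surjective (F.map T.mor₁ ≫ φ)
    let T2 := F.mapTriangle.obj T.invRotate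
    have hT2 : T2 ∈ distTriang D :=
      F.map_distinguished _ (inv_rot_of_distTriang _ hT)
    have e2 : T.invRotate.mor₁ ≫ ψ₁ = 0 := by
      apply h₃'.injective
      show F.map (T.invRotate.mor₁ ≫ ψ₁) = F.map 0
      refine (F.map_comp _ _).trans ((congrArg (F.map T.invRotate.mor₁ ≫ ·) hψ₁).trans
        ((Category.assoc _ _ _).symm.trans ?_))
      have : F.map T.invRotate.mor₁ ≫ F.map T.mor₁ = 0 := by
        have := comp_distTriang_mor_zero₁₂ _ hT2
        exact this
      erw [this, zero_comp, F.map_zero]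
    obtain ⟨ψ₂, hψ₂⟩ := Triangle.yoneda_exact₂ _ (inv_rot_of_distTriang _ hT) ψ₁ e2
    let ψ₂' : T.obj₂ ⟶ N := ψ₂
    have hψ₂' : ψ₁ = T.mor₁ ≫ ψ₂' := hψ₂
    have e4 : (F.mapTriangle.obj T).mor₁ ≫ (φ - F.map ψ₂') = 0 := by
      show F.map T.mor₁ ≫ (φ - F.map ψ₂') = 0
      rw [Preadditive.comp_sub, ← F.map_comp]
      rw [show T.mor₁ ≫ ψ₂' = ψ₁ from hψ₂'.symm, hψ₁, sub_self]
    obtain ⟨χ, hχ⟩ := Triangle.yoneda_exact₂ _ (F.map_distinguished _ hT)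
      (φ - F.map ψ₂') e4
    obtain ⟨ξ, hξ⟩ := h₃.surjective χ
    have hχ' : φ - F.map ψ₂' = F.map T.mor₂ ≫ χ := hχ
    refine ⟨ψ₂' + T.mor₂ ≫ ξ, ?_⟩
    rw [F.map_add, F.map_comp, hξ, ← hχ']
    abel

end Good

end Stmt1Aux

open Stmt1Aux in
theorem stmt1 {D₁' : Type u₁} {D₂' : Type u₂} [Category.{v₁} D₁'] [Category.{v₂} D₂']
    [HasZeroObject D₁'] [HasShift D₁' ℤ] [Preadditive D₁']
    [∀ n : ℤ, (shiftFunctor D₁' n).Additive] [Pretriangulated D₁']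
    [HasZeroObject D₂'] [HasShift D₂' ℤ] [Preadditive D₂']
    [∀ n : ℤ, (shiftFunctor D₂' n).Additive] [Pretriangulated D₂']
    (S₁ : Triangulated.Subcategory D₁') (S₂ : Triangulated.Subcategory D₂')
    -- both subcategories are left admissible (the inclusions admit left adjoints):
    (hadm₁ : (ObjectProperty.ι S₁.P).IsRightAdjoint)
    (hadm₂ : (ObjectProperty.ι S₂.P).IsRightAdjoint)
    -- `F` is a triangulated functor:
    (F : D₁' ⥤ D₂') [F.CommShift ℤ] [F.IsTriangulated]
    -- (i) `F` sends `D₁` into `D₂` and `^⊥D₁` into `^⊥D₂` ...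
    (hD : ∀ X : ObjectProperty.FullSubcategory S₁.P, S₂.P (F.obj X.obj))
    (hperp : ∀ X : ObjectProperty.FullSubcategory (leftOrthogonal S₁.P),
      leftOrthogonal S₂.P (F.obj X.obj))
    -- ... and the induced functors `D₁ → D₂` and `^⊥D₁ → ^⊥D₂` are equivalences:
    (heq : (ObjectProperty.lift S₂.P (ObjectProperty.ι S₁.P ⋙ F)
      hD).IsEquivalence)
    (heqperp : (ObjectProperty.lift (leftOrthogonal S₂.P)
      (ObjectProperty.ι (leftOrthogonal S₁.P) ⋙ F) hperp).IsEquivalence)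
    -- (ii) `D₁` is also right admissible (the inclusion admits a right adjoint) ...
    (hradm₁ : (ObjectProperty.ι S₁.P).IsLeftAdjoint)
    -- ... and `F` sends `D₁^⊥` into `D₂^⊥`:
    (hrperp : ∀ X : D₁', rightOrthogonal S₁.P X → rightOrthogonal S₂.P (F.obj X)) :
    F.IsEquivalence := by
  haveI := heq
  haveI := heqperp
  have lsh₁ : ∀ (M : D₁'), leftOrthogonal S₁.P M → ∀ n : ℤ, leftOrthogonal S₁.P (M⟦n⟧) :=
    fun M hM n => leftOrthogonal_shift S₁.shift hM n
  have rsh₁ : ∀ (M : D₁'), rightOrthogonal S₁.P M → ∀ n : ℤ, rightOrthogonal S₁.P (M⟦n⟧) :=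
    fun M hM n => rightOrthogonal_shift S₁.shift hM n
  -- (a): both objects in D₁
  have goodDD : ∀ (M N : D₁'), S₁.P M → S₁.P N → IsGood F M N := by
    intro M N hM hN
    constructor
    · intro f g hfg
      have h2 : (ObjectProperty.lift S₂.P (ObjectProperty.ι S₁.P ⋙ F) hD).map
          (X := ⟨M, hM⟩) (Y := ⟨N, hN⟩) (ObjectProperty.homMk f)
          = (ObjectProperty.lift S₂.P (ObjectProperty.ι S₁.P ⋙ F) hD).map (ObjectProperty.homMk g) := congrArg ObjectProperty.homMk hfg
      exact (ObjectProperty.lift S₂.P (ObjectProperty.ι S₁.P ⋙ F) hD).map_injective h2 |> congrArg InducedCategory.Hom.hom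
    · intro φ
      obtain ⟨f, hf⟩ := (ObjectProperty.lift S₂.P (ObjectProperty.ι S₁.P ⋙ F)
        hD).map_surjective
        (show (ObjectProperty.lift S₂.P (ObjectProperty.ι S₁.P ⋙ F) hD).obj ⟨M, hM⟩
          ⟶ (ObjectProperty.lift S₂.P (ObjectProperty.ι S₁.P ⋙ F) hD).obj ⟨N, hN⟩
          from ObjectProperty.homMk φ)
      have hf' := congrArg InducedCategory.Hom.hom hf
      exact ⟨f.hom, hf'⟩
  -- (b): both objects in the left orthogonal
  have goodPP : ∀ (M N : D₁'), leftOrthogonal S₁.P M → leftOrthogonal S₁.P N →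
      IsGood F M N := by
    intro M N hM hN
    constructor
    · intro f g hfg
      have h2 : (ObjectProperty.lift (leftOrthogonal S₂.P)
            (ObjectProperty.ι (leftOrthogonal S₁.P) ⋙ F) hperp).map
          (X := ⟨M, hM⟩) (Y := ⟨N, hN⟩) (ObjectProperty.homMk f)
          = (ObjectProperty.lift (leftOrthogonal S₂.P)
            (ObjectProperty.ι (leftOrthogonal S₁.P) ⋙ F) hperp).map (ObjectProperty.homMk g) := congrArg ObjectProperty.homMk hfg
      exact (ObjectProperty.lift (leftOrthogonal S₂.P)
        (ObjectProperty.ι (leftOrthogonal S₁.P) ⋙ F) hperp).map_injective h2 |> congrArg InducedCategory.Hom.hom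
    · intro φ
      obtain ⟨f, hf⟩ := (ObjectProperty.lift (leftOrthogonal S₂.P)
        (ObjectProperty.ι (leftOrthogonal S₁.P) ⋙ F) hperp).map_surjective
        (show (ObjectProperty.lift (leftOrthogonal S₂.P)
            (ObjectProperty.ι (leftOrthogonal S₁.P) ⋙ F) hperp).obj ⟨M, hM⟩
          ⟶ (ObjectProperty.lift (leftOrthogonal S₂.P)
            (ObjectProperty.ι (leftOrthogonal S₁.P) ⋙ F) hperp).obj ⟨N, hN⟩
          from ObjectProperty.homMk φ)
      have hf' := congrArg InducedCategory.Hom.hom hf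
      exact ⟨f.hom, hf'⟩
  -- (c): source in the left orthogonal, target in D₁
  have goodPD : ∀ (M N : D₁'), leftOrthogonal S₁.P M → S₁.P N → IsGood F M N := by
    intro M N hM hN
    exact isGood_of_map_eq_zero F M N (fun f => hM N hN f)
      (fun φ => hperp ⟨M, hM⟩ _ (hD ⟨N, hN⟩) φ)
  -- (d): source in D₁, arbitrary target
  have goodDany : ∀ (M N : D₁'), S₁.P M → IsGood F M N := by
    intro M N hM
    obtain ⟨A, B, a, b, c, hA, hB, hTd⟩ := factR S₁ hradm₁ N
    have hFT := F.map_distinguished _ hTd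
    constructor
    · intro f g hfg
      rw [← sub_eq_zero]
      have key : ∀ (χ : M ⟶ N), F.map χ = 0 → χ = 0 := by
        intro χ hχ
        have e0 : χ ≫ (Triangle.mk a b c).mor₂ = 0 := hB M hM (χ ≫ b)
        obtain ⟨α, hα⟩ := Triangle.coyoneda_exact₂ _ hTd χ e0
        have hα' : χ = α ≫ a := hα
        have e1 : F.map α ≫
            (F.mapTriangle.obj (Triangle.mk a b c).invRotate).mor₂ = 0 := by
          show F.map α ≫ F.map a = 0
          erw [← F.map_comp, ← hα', hχ]
        obtain ⟨β, hβ⟩ := Triangle.coyoneda_exact₂ _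
          (F.map_distinguished _ (inv_rot_of_distTriang _ hTd)) (F.map α) e1
        have hβ0 : β = 0 := hrperp _ (rsh₁ B hB (-1)) (F.obj M) (hD ⟨M, hM⟩) β
        rw [hβ0, zero_comp] at hβ
        have hα0 : α = 0 := (goodDD M A hM hA).injective (by erw [hβ, F.map_zero]; rfl)
        erw [hα', hα0, zero_comp]
      apply key
      rw [F.map_sub, hfg, sub_self]
    · intro φ
      have e0 : φ ≫ (F.mapTriangle.obj (Triangle.mk a b c)).mor₂ = 0 :=
        hrperp B hB (F.obj M) (hD ⟨M, hM⟩) (φ ≫ F.map b)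
      obtain ⟨χ, hχ⟩ := Triangle.coyoneda_exact₂ _ hFT φ e0
      obtain ⟨ξ, hξ⟩ := (goodDD M A hM hA).surjective χ
      have hχ' : φ = χ ≫ F.map a := hχ
      exact ⟨ξ ≫ a, by erw [F.map_comp, hξ, ← hχ']⟩
  -- left orthogonal source, arbitrary target
  have goodPany : ∀ (M N : D₁'), leftOrthogonal S₁.P M → IsGood F M N := by
    intro M N hM
    obtain ⟨A, B, a, b, c, hA, hB, hTd⟩ := factL S₁ hadm₁ N
    exact isGood_cov F _ hTd M (goodPP M A hM hA) (goodPD M B hM hB)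
      (goodPP M _ hM (lsh₁ A hA 1)) (goodPD M _ hM (S₁.shift B (-1) hB))
  -- all pairs
  have goodAll : ∀ (M N : D₁'), IsGood F M N := by
    intro M N
    obtain ⟨A, B, a, b, c, hA, hB, hTd⟩ := factL S₁ hadm₁ M
    exact isGood_con F _ hTd N (goodPany A N hA) (goodDany B N hB)
      (goodPany _ N (lsh₁ A hA 1)) (goodDany _ N (S₁.shift B (-1) hB))
  have hfaith : F.Faithful := ⟨fun {X Y} {f g} h => (goodAll X Y).injective h⟩
  have hfull : F.Full := ⟨fun {X Y} => (goodAll X Y).surjective⟩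
  have hess : F.EssSurj := by
    constructor
    intro Z
    obtain ⟨A, B, a, b, c, hA, hB, hTZ⟩ := factL S₂ hadm₂ Z
    let Gp := ObjectProperty.lift (leftOrthogonal S₂.P)
      (ObjectProperty.ι (leftOrthogonal S₁.P) ⋙ F) hperp
    let Gd := ObjectProperty.lift S₂.P (ObjectProperty.ι S₁.P ⋙ F) hD
    let A₀ := Gp.objPreimage ⟨A, hA⟩
    let eA : F.obj A₀.obj ≅ A :=
      (ObjectProperty.ι (leftOrthogonal S₂.P)).mapIso (Gp.objObjPreimageIso ⟨A, hA⟩)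
    let B₀ := Gd.objPreimage ⟨B, hB⟩
    let eB : F.obj B₀.obj ≅ B :=
      (ObjectProperty.ι S₂.P).mapIso (Gd.objObjPreimageIso ⟨B, hB⟩)
    obtain ⟨g, hg⟩ := (goodAll B₀.obj (A₀.obj⟦(1:ℤ)⟧)).surjective
      (eB.hom ≫ c ≫ (shiftFunctor D₂' (1:ℤ)).map eA.inv ≫
        (F.commShiftIso (1:ℤ)).inv.app A₀.obj)
    obtain ⟨Y, f', g', hTX⟩ := distinguished_cocone_triangle₂ g
    have hT1 : F.mapTriangle.obj (Triangle.mk f' g' g) ∈ distTriang D₂' :=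
      F.map_distinguished _ hTX
    have comm : (F.mapTriangle.obj (Triangle.mk f' g' g)).mor₃ ≫
        (shiftFunctor D₂' (1:ℤ)).map eA.hom = eB.hom ≫ (Triangle.mk a b c).mor₃ := by
      show (F.map g ≫ (F.commShiftIso (1:ℤ)).hom.app A₀.obj) ≫
        (shiftFunctor D₂' (1:ℤ)).map eA.hom = eB.hom ≫ c
      rw [hg]
      simp [← Functor.map_comp]
    obtain ⟨β, hβ₁, hβ₂⟩ := complete_distinguished_triangle_morphism₂ _ _ hT1 hTZ
      eA.hom eB.hom comm
    have hIso : IsIso ((⟨eA.hom, β, eB.hom, hβ₁, hβ₂, comm⟩ :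
        F.mapTriangle.obj (Triangle.mk f' g' g) ⟶ Triangle.mk a b c).hom₂) := by
      apply isIso₂_of_isIso₁₃ _ hT1 hTZ
      · dsimp
        exact eA.isIso_hom
      · dsimp
        exact eB.isIso_hom
    have hβ : IsIso β := hIso
    exact ⟨Y, ⟨(@asIso _ _ _ _ β hβ : F.obj Y ≅ Z)⟩⟩
  exact { faithful := hfaith, full := hfull, essSurj := hess }
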